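/- Sum–product estimate with polynomially growing constants: fix 0 < γ < 1; there exist ε₁ > 0 and k ∈ ℕ such that for all η ∈ ℂ with |η| large, all 1 < R < |η|^{ε₁}, and all Borel measures λ₁, …, λ_k supported on {R^{-1} ≤ |z| ≤ R} with total mass ≤ R each satisfying the projective non-concentration property sup_{a,θ} λ_j{z : |Re(e^{iθ}z) − a| ≤ σ} ≤ σ^γ for all σ ∈ [|η|^{-2}, |η|^{-ε₁}], one has |∫ exp(2πi Re(η z₁⋯z_k)) dλ₁(z₁)⋯dλ_k(z_k)| ≤ c|η|^{-ε₁} with c depending only on γ. -/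

import Mathlib

open MeasureTheory Real
open scoped ENNReal

namespace SP16aux

lemma rpow_sum {ι : Type*} (s : Finset ι) (x : ℝ) (hx : 0 < x) (f : ι → ℝ) :
    x ^ (∑ j ∈ s, f j) = ∏ j ∈ s, x ^ (f j) := by
  classical
  induction s using Finset.induction_on with
  | empty => simp
  | insert _ _ h ih =>
      rw [Finset.sum_insert h, Finset.prod_insert h, Real.rpow_add hx, ih]

/-- dyadic annulus -/
def Ann (r : ℤ) : Set ℂ := {z | (2:ℝ) ^ ((r:ℝ) - 1) < ‖z‖ ∧ ‖z‖ ≤ (2:ℝ) ^ (r:ℝ)}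

lemma measurableSet_Ann (r : ℤ) : MeasurableSet (Ann r) := by
  show MeasurableSet ((fun z : ℂ => ‖z‖) ⁻¹' Set.Ioc ((2:ℝ) ^ ((r:ℝ) - 1)) ((2:ℝ) ^ (r:ℝ)))
  exact measurable_norm measurableSet_Ioc

lemma Ann_disjoint {r r' : ℤ} (h : r ≠ r') : Disjoint (Ann r) (Ann r') := by
  wlog hlt : r < r' generalizing r r'
  · exact (this h.symm (by omega)).symm
  rw [Set.disjoint_left]
  rintro z ⟨_, h2⟩ ⟨h3, _⟩
  have h4 : ((r:ℝ) + 1) ≤ (r':ℝ) := by exact_mod_cast Int.add_one_le_iff.mpr hlt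
  have h5 : (2:ℝ) ^ ((r:ℝ)) ≤ (2:ℝ) ^ ((r':ℝ) - 1) :=
    Real.rpow_le_rpow_of_exponent_le one_le_two (by linarith)
  linarith

lemma mem_Ann (z : ℂ) (hz : 0 < ‖z‖) : z ∈ Ann ⌈Real.logb 2 ‖z‖⌉ := by
  set L := Real.logb 2 ‖z‖ with hL
  have hzL : (2:ℝ) ^ L = ‖z‖ := Real.rpow_logb two_pos (by norm_num) hz
  constructor
  · have h1 : (⌈L⌉ : ℝ) - 1 < L := by
      have := Int.ceil_lt_add_one L; linarith
    calc (2:ℝ) ^ ((⌈L⌉:ℝ) - 1) < 2 ^ L :=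
          Real.rpow_lt_rpow_of_exponent_lt one_lt_two h1
      _ = ‖z‖ := hzL
  · calc ‖z‖ = 2 ^ L := hzL.symm
      _ ≤ 2 ^ ((⌈L⌉:ℝ)) := Real.rpow_le_rpow_of_exponent_le one_le_two (Int.le_ceil L)

lemma pi_restrict {k : ℕ} (μ : Fin k → Measure ℂ) [∀ j, IsFiniteMeasure (μ j)]
    (s : Fin k → Set ℂ) (hs : ∀ j, MeasurableSet (s j)) :
    Measure.pi (fun j => (μ j).restrict (s j)) = (Measure.pi μ).restrict (Set.pi Set.univ s) := by
  haveI : ∀ j, SigmaFinite (μ j) := fun j => inferInstance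
  haveI : ∀ j, IsFiniteMeasure ((μ j).restrict (s j)) := fun j =>
    ⟨by rw [Measure.restrict_apply_univ]; exact measure_lt_top _ _⟩
  refine Measure.pi_eq fun t ht => ?_
  rw [Measure.restrict_apply (MeasurableSet.univ_pi ht), ← Set.pi_inter_distrib, Measure.pi_pi]
  exact Finset.prod_congr rfl fun j _ => (Measure.restrict_apply (ht j)).symm

lemma pi_smul {k : ℕ} (c : ℝ≥0∞) (hc : c ≠ ⊤) (μ : Fin k → Measure ℂ)
    [∀ j, IsFiniteMeasure (μ j)] :
    Measure.pi (fun j => c • μ j) = c ^ k • Measure.pi μ := by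
  haveI : ∀ j, SigmaFinite (μ j) := fun j => inferInstance
  haveI : ∀ j, IsFiniteMeasure (c • μ j) := fun j =>
    ⟨by
      rw [Measure.smul_apply, smul_eq_mul]
      exact ENNReal.mul_lt_top hc.lt_top (measure_lt_top _ _)⟩
  refine Measure.pi_eq fun t ht => ?_
  rw [Measure.smul_apply, smul_eq_mul, Measure.pi_pi]
  simp only [Measure.smul_apply, smul_eq_mul]
  rw [Finset.prod_mul_distrib, Finset.prod_const, Finset.card_univ, Fintype.card_fin]

end SP16aux

set_option maxHeartbeats 2000000 in
open SP16aux in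
/-- Sum–product estimate with polynomially growing constants (Theorem 5.2): fix `0 < γ < 1`.
Assuming the Bourgain–Li complex sum–product theorem (hypothesis `hBL`), there exist `ε₁ > 0`
and `k ∈ ℕ` such that for all `η ∈ ℂ` with `|η|` large, all `1 < R < |η|^{ε₁}`, and all Borel
measures `λ₁, …, λ_k` supported on the annulus `{R⁻¹ ≤ |z| ≤ R}` with total mass `≤ R`,
each satisfying the projective non-concentration property
`λ_j{z : |Re(e^{iθ}z) − a| ≤ σ} ≤ σ^γ` for `σ ∈ [|η|^{-2}, |η|^{-ε₁}]`, one has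
`|∫ exp(2πi Re(η z₁⋯z_k)) dλ₁⋯dλ_k| ≤ c |η|^{-ε₁}` with `c` depending only on `γ`. -/
theorem stmt_16 (γ : ℝ) (hγ0 : 0 < γ) (hγ1 : γ < 1)
    -- Bourgain–Li sum–product theorem, as a black box:
    (hBL : ∀ γ' : ℝ, 0 < γ' → ∃ ε₂ : ℝ, 0 < ε₂ ∧ ε₂ < 1 ∧ ∃ k : ℕ, 0 < k ∧
      ∀ C₀ : ℝ, 1 < C₀ → ∃ C₁ : ℝ, 0 < C₁ ∧ ∀ η : ℂ, 1 < ‖η‖ →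
        ∀ lam : Fin k → Measure ℂ,
          (∀ j, lam j {z : ℂ | ¬(C₀⁻¹ ≤ ‖z‖ ∧ ‖z‖ ≤ C₀)} = 0) →
          (∀ j, lam j Set.univ ≤ ENNReal.ofReal C₀) →
          (∀ j, ∀ σ : ℝ, C₀ * ‖η‖⁻¹ ≤ σ → σ ≤ C₀⁻¹ * ‖η‖ ^ (-ε₂) → ∀ a θ : ℝ,
            (lam j {z : ℂ | |(Complex.exp (θ * Complex.I) * z).re - a| ≤ σ}).toReal
              ≤ C₀ * σ ^ γ') →
          ‖∫ z : Fin k → ℂ,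
              Complex.exp (2 * π * ((η * ∏ j, z j).re) * Complex.I) ∂(Measure.pi lam)‖
            ≤ C₁ * ‖η‖ ^ (-ε₂)) :
    ∃ ε₁ : ℝ, 0 < ε₁ ∧ ∃ k : ℕ, 0 < k ∧ ∃ c : ℝ, 0 < c ∧ ∃ M : ℝ,
      ∀ η : ℂ, M ≤ ‖η‖ → ∀ R : ℝ, 1 < R → R < ‖η‖ ^ ε₁ →
        ∀ lam : Fin k → Measure ℂ,
          (∀ j, lam j {z : ℂ | ¬(R⁻¹ ≤ ‖z‖ ∧ ‖z‖ ≤ R)} = 0) →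
          (∀ j, lam j Set.univ ≤ ENNReal.ofReal R) →
          (∀ j, ∀ σ : ℝ, ‖η‖ ^ (-(2:ℝ)) ≤ σ → σ ≤ ‖η‖ ^ (-ε₁) → ∀ a θ : ℝ,
            (lam j {z : ℂ | |(Complex.exp (θ * Complex.I) * z).re - a| ≤ σ}).toReal
              ≤ σ ^ γ) →
          ‖∫ z : Fin k → ℂ,
              Complex.exp (2 * π * ((η * ∏ j, z j).re) * Complex.I) ∂(Measure.pi lam)‖
            ≤ c * ‖η‖ ^ (-ε₁) := by
  classical
  obtain ⟨ε₂, hε₂0, hε₂1, k, hk0, hBL2⟩ := hBL γ hγ0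
  obtain ⟨C₁, hC₁0, hmain⟩ := hBL2 2 one_lt_two
  have hkR : (1:ℝ) ≤ (k:ℝ) := by exact_mod_cast hk0
  set K : ℝ := (k:ℝ) with hK
  set ε₁ : ℝ := ε₂ / (2 * (2 * K + 1)) with hε₁def
  have hden : 0 < 2 * (2*K+1) := by linarith
  have hε₁0 : 0 < ε₁ := div_pos hε₂0 hden
  have hε₁eq : ε₁ * (2 * (2*K+1)) = ε₂ := div_mul_cancel₀ _ (ne_of_gt hden)
  have hε₂le1 : ε₂ ≤ 1 := le_of_lt hε₂1
  have hkey1 : 2 * (K+1) * ε₁ ≤ ε₂ := by nlinarith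
  have hkey2 : 2 * K * ε₁ ≤ ε₂ / 2 := by nlinarith
  refine ⟨ε₁, hε₁0, k, hk0, (4*K+3)^k * C₁, by positivity, max 4 ((2:ℝ) ^ (ε₁⁻¹)), ?_⟩
  intro η hM R hR1 hRX lam hsupp hmass hnc
  haveI : ∀ j, IsFiniteMeasure (lam j) :=
    fun j => ⟨lt_of_le_of_lt (hmass j) ENNReal.ofReal_lt_top⟩
  haveI : ∀ j, SigmaFinite (lam j) := fun j => inferInstance
  set X : ℝ := ‖η‖ with hXdef
  have hX4 : (4:ℝ) ≤ X := le_trans (le_max_left _ _) hM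
  have hX1 : (1:ℝ) < X := by linarith
  have hX0 : (0:ℝ) < X := by linarith
  have hR0 : (0:ℝ) < R := by linarith
  have hXrpow_le : ∀ {a b : ℝ}, a ≤ b → X ^ a ≤ X ^ b :=
    fun hab => Real.rpow_le_rpow_of_exponent_le hX1.le hab
  have h2Xε : (2:ℝ) ≤ X ^ ε₁ := by
    have h1 : (2:ℝ) ^ (ε₁⁻¹) ≤ X := le_trans (le_max_right _ _) hM
    calc (2:ℝ) = ((2:ℝ) ^ (ε₁⁻¹)) ^ ε₁ := by
          rw [← Real.rpow_mul (by norm_num), inv_mul_cancel₀ (ne_of_gt hε₁0), Real.rpow_one]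
      _ ≤ X ^ ε₁ := Real.rpow_le_rpow (by positivity) h1 hε₁0.le
  have hRle : R ≤ X ^ ε₁ := le_of_lt hRX
  have h2R : 2 * R ≤ X ^ (2*ε₁) := by
    calc 2 * R ≤ X^ε₁ * X^ε₁ := mul_le_mul h2Xε hRle hR0.le (by positivity)
      _ = X ^ (2*ε₁) := by rw [← Real.rpow_add hX0]; ring_nf
  have h2R1 : (1:ℝ) ≤ 2 * R := by linarith
  have h2R0 : (0:ℝ) < 2 * R := by linarith
  -- half-power bound
  have hhalf : (2:ℝ) ≤ X ^ (1/2 : ℝ) := by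
    have h4 : ((4:ℝ)) ^ (1/2:ℝ) = 2 := by
      rw [show (4:ℝ) = 2^(2:ℕ) by norm_num, ← Real.rpow_natCast 2 2,
        ← Real.rpow_mul (by norm_num : (0:ℝ) ≤ 2)]
      norm_num
    calc (2:ℝ) = (4:ℝ) ^ (1/2:ℝ) := h4.symm
      _ ≤ X ^ (1/2:ℝ) := Real.rpow_le_rpow (by norm_num : (0:ℝ) ≤ 4) hX4 (by norm_num)
  -- dyadic scales
  set n : ℤ := ⌈Real.logb 2 R⌉ with hn
  have hlogbR0 : 0 ≤ Real.logb 2 R := Real.logb_nonneg one_lt_two hR1.le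
  have hn0 : 0 ≤ n := Int.ceil_nonneg hlogbR0
  have hnlt : (n:ℝ) < Real.logb 2 R + 1 := Int.ceil_lt_add_one _
  have hnge : Real.logb 2 R ≤ (n:ℝ) := Int.le_ceil _
  set S : Finset ℤ := Finset.Icc (-n) n with hS
  have hRpowlogb : (2:ℝ) ^ (Real.logb 2 R) = R := Real.rpow_logb two_pos (by norm_num) hR0
  have h2pow : ∀ r ∈ S, (2:ℝ) ^ (r:ℝ) ≤ 2*R ∧ (2*R)⁻¹ ≤ (2:ℝ) ^ (r:ℝ) := by
    intro r hr
    rw [hS, Finset.mem_Icc] at hr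
    have hub : ((r:ℝ)) ≤ Real.logb 2 R + 1 := by
      have h1 : (r:ℝ) ≤ (n:ℝ) := by exact_mod_cast hr.2
      linarith
    have hlb : -(Real.logb 2 R + 1) ≤ (r:ℝ) := by
      have h1 : ((-n : ℤ):ℝ) ≤ (r:ℝ) := by exact_mod_cast hr.1
      push_cast at h1
      linarith
    have h2Rpow : (2:ℝ) ^ (Real.logb 2 R + 1) = 2 * R := by
      rw [Real.rpow_add two_pos, hRpowlogb, Real.rpow_one]; ring
    constructor
    · calc (2:ℝ)^(r:ℝ) ≤ 2 ^ (Real.logb 2 R + 1) :=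
            Real.rpow_le_rpow_of_exponent_le one_le_two hub
        _ = 2 * R := h2Rpow
    · calc (2*R)⁻¹ = (2:ℝ) ^ (-(Real.logb 2 R + 1)) := by
            rw [Real.rpow_neg (by norm_num : (0:ℝ) ≤ 2), h2Rpow]
        _ ≤ (2:ℝ) ^ (r:ℝ) := Real.rpow_le_rpow_of_exponent_le one_le_two hlb
  -- the integrand
  set f : (Fin k → ℂ) → ℂ :=
    fun z => Complex.exp (2 * π * ((η * ∏ j, z j).re) * Complex.I) with hf
  have hf_cont : Continuous f := by
    rw [hf]; fun_prop
  have hf_norm : ∀ z, ‖f z‖ = 1 := by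
    intro z
    rw [hf]
    simp [Complex.norm_exp, Complex.mul_re, Complex.mul_im,
      Complex.I_re, Complex.I_im, Complex.ofReal_re, Complex.ofReal_im, Real.exp_zero]
  have hcover : ∀ z : ℂ, R⁻¹ ≤ ‖z‖ → ‖z‖ ≤ R → ∃ r ∈ S, z ∈ Ann r := by
    intro z h1 h2
    have hz0 : 0 < ‖z‖ := lt_of_lt_of_le (by positivity) h1
    refine ⟨⌈Real.logb 2 ‖z‖⌉, ?_, mem_Ann z hz0⟩
    rw [hS, Finset.mem_Icc]
    have hup : Real.logb 2 ‖z‖ ≤ Real.logb 2 R := Real.logb_le_logb_of_le one_lt_two hz0 h2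
    have hdown : -Real.logb 2 R ≤ Real.logb 2 ‖z‖ := by
      have := Real.logb_le_logb_of_le one_lt_two (by positivity : (0:ℝ) < R⁻¹) h1
      rwa [Real.logb_inv] at this
    constructor
    · have hfl : ⌊-Real.logb 2 R⌋ = -n := by rw [Int.floor_neg, ← hn]
      rw [← hfl]
      exact le_trans (Int.floor_mono hdown) (Int.floor_le_ceil _)
    · exact Int.ceil_mono hup
  set W : Set ℂ := ⋃ r ∈ S, Ann r with hW
  have hWc : ∀ j, lam j Wᶜ = 0 := by
    intro j
    refine measure_mono_null ?_ (hsupp j)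
    intro z hz
    simp only [Set.mem_compl_iff, hW, Set.mem_iUnion, not_exists] at hz
    simp only [Set.mem_setOf_eq]
    rintro ⟨h1, h2⟩
    obtain ⟨r, hrS, hrA⟩ := hcover z h1 h2
    exact hz r hrS hrA
  set P : Finset (Fin k → ℤ) := Fintype.piFinset (fun _ : Fin k => S) with hP
  set B : (Fin k → ℤ) → Set (Fin k → ℂ) :=
    fun ρ => Set.pi Set.univ (fun j => Ann (ρ j)) with hB
  have hBmeas : ∀ ρ, MeasurableSet (B ρ) := fun ρ =>
    MeasurableSet.univ_pi fun j => measurableSet_Ann _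
  have hBdisj : Set.Pairwise (↑P) (Function.onFun Disjoint B) := by
    intro ρ _ ρ' _ hne
    obtain ⟨j, hj⟩ := Function.ne_iff.mp hne
    rw [Function.onFun, Set.disjoint_left]
    intro z hz hz'
    exact Set.disjoint_left.mp (Ann_disjoint hj) (hz j (Set.mem_univ j)) (hz' j (Set.mem_univ j))
  have hUc : Measure.pi lam ((⋃ ρ ∈ P, B ρ)ᶜ) = 0 := by
    have hsub : (⋃ ρ ∈ P, B ρ)ᶜ ⊆ ⋃ j, Function.eval j ⁻¹' Wᶜ := by
      intro z hz
      by_contra hcon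
      simp only [Set.mem_iUnion, not_exists, Set.mem_preimage, Set.mem_compl_iff, not_not,
        Function.eval] at hcon
      have hex : ∀ j, ∃ r, r ∈ S ∧ z j ∈ Ann r := by
        intro j
        have h := hcon j
        simp only [hW, Set.mem_iUnion] at h
        obtain ⟨r, hr1, hr2⟩ := h
        exact ⟨r, hr1, hr2⟩
      choose r hrS hrA using hex
      exact hz (Set.mem_biUnion (Fintype.mem_piFinset.mpr hrS) (fun j _ => hrA j))
    refine measure_mono_null hsub (measure_iUnion_null fun j => ?_)
    exact Measure.pi_eval_preimage_null _ (hWc j)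
  have hf_int : Integrable f (Measure.pi lam) := by
    refine Integrable.mono' (integrable_const 1) hf_cont.aestronglyMeasurable ?_
    exact Filter.Eventually.of_forall fun z => le_of_eq (hf_norm z)
  have hdecomp : ∫ z, f z ∂(Measure.pi lam) = ∑ ρ ∈ P, ∫ z in B ρ, f z ∂(Measure.pi lam) := by
    have hU : MeasurableSet (⋃ ρ ∈ P, B ρ) :=
      P.measurableSet_biUnion (fun ρ _ => hBmeas ρ)
    rw [← integral_add_compl hU hf_int, setIntegral_measure_zero _ hUc, add_zero,
      integral_biUnion_finset P (fun ρ _ => hBmeas ρ) hBdisj (fun ρ _ => hf_int.integrableOn)]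
  -- cardinality bound
  have hKpos : (0:ℝ) < K := by linarith
  have hcardS : ((S.card : ℝ)) = 2*(n:ℝ)+1 := by
    have h1 : S.card = (2*n+1).toNat := by rw [hS, Int.card_Icc]; congr 1; ring
    have h2 : ((2*n+1).toNat : ℤ) = 2*n+1 := Int.toNat_of_nonneg (by omega)
    rw [h1]
    exact_mod_cast congrArg (fun m : ℤ => (m:ℝ)) h2
  have hlog2 : (0.6931471803:ℝ) < Real.log 2 := Real.log_two_gt_d9
  have hlogbR : Real.logb 2 R ≤ 2 * Real.log R := by
    rw [Real.logb, div_le_iff₀ (by linarith)]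
    nlinarith [Real.log_nonneg hR1.le]
  have hlogR : Real.log R ≤ ε₁ * Real.log X := by
    calc Real.log R ≤ Real.log (X ^ ε₁) := Real.log_le_log hR0 hRle
      _ = ε₁ * Real.log X := Real.log_rpow hX0 _
  have hlogX0 : 0 ≤ Real.log X := Real.log_nonneg hX1.le
  have hncard : (S.card:ℝ) ≤ 4*(ε₁*Real.log X) + 3 := by
    rw [hcardS]
    have h1 : ε₁ * Real.log R ≤ ε₁ * (ε₁ * Real.log X) := by
      exact mul_le_mul_of_nonneg_left hlogR hε₁0.le
    linarith [hnlt, hlogbR, hlogR]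
  have hβ : (0:ℝ) < ε₁ / K := div_pos hε₁0 hKpos
  have hXβ1 : (1:ℝ) ≤ X ^ (ε₁/K) := by
    have := hXrpow_le (le_of_lt hβ)
    rwa [Real.rpow_zero] at this
  have hlogX_le : Real.log X ≤ (K/ε₁) * X ^ (ε₁/K) := by
    calc Real.log X ≤ X ^ (ε₁/K) / (ε₁/K) := Real.log_le_rpow_div hX0.le hβ
      _ = (K/ε₁) * X ^ (ε₁/K) := by rw [div_eq_mul_inv, inv_div]; ring
  have hScard_le : (S.card:ℝ) ≤ (4*K+3) * X ^ (ε₁/K) := by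
    have h1 : 4*(ε₁*Real.log X) ≤ 4*K * X^(ε₁/K) := by
      have h2 : ε₁ * Real.log X ≤ ε₁ * ((K/ε₁) * X ^ (ε₁/K)) :=
        mul_le_mul_of_nonneg_left hlogX_le hε₁0.le
      have h3 : ε₁ * ((K/ε₁) * X ^ (ε₁/K)) = K * X ^ (ε₁/K) := by
        field_simp
      nlinarith [h2, h3]
    have h2 : (3:ℝ) ≤ 3 * X ^ (ε₁/K) := by nlinarith [hXβ1]
    calc (S.card:ℝ) ≤ 4*(ε₁*Real.log X) + 3 := hncard
      _ ≤ 4*K*X^(ε₁/K) + 3*X^(ε₁/K) := by linarith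
      _ = (4*K+3) * X ^ (ε₁/K) := by ring
  have hcardP : ((P.card : ℝ)) ≤ (4*K+3)^k * X ^ ε₁ := by
    have h0 : (0:ℝ) ≤ (S.card:ℝ) := by positivity
    have h1 : P.card = S.card ^ k := by
      rw [hP, Fintype.card_piFinset]
      simp [Finset.prod_const]
    have h2 : ((P.card:ℝ)) = ((S.card:ℝ))^k := by rw [h1]; push_cast; ring
    rw [h2]
    calc ((S.card:ℝ))^k ≤ ((4*K+3) * X ^ (ε₁/K))^k :=
          pow_le_pow_left₀ h0 hScard_le k
      _ = (4*K+3)^k * (X ^ (ε₁/K))^k := mul_pow _ _ _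
      _ = (4*K+3)^k * X ^ ε₁ := by
          rw [← Real.rpow_natCast (X ^ (ε₁/K)) k, ← Real.rpow_mul hX0.le]
          rw [← hK]
          congr 2
          field_simp
  -- per-term bound
  have hterm : ∀ ρ ∈ P, ‖∫ z in B ρ, f z ∂(Measure.pi lam)‖ ≤ C₁ * X ^ (-((K+2) * ε₁)) := by
    intro ρ hρ
    have hρS : ∀ j, ρ j ∈ S := Fintype.mem_piFinset.mp hρ
    set sc : Fin k → ℝ := fun j => (2:ℝ) ^ ((ρ j : ℝ)) with hsc
    have hsc_pos : ∀ j, 0 < sc j := fun j => Real.rpow_pos_of_pos two_pos _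
    have hsc_ub : ∀ j, sc j ≤ 2*R := fun j => (h2pow _ (hρS j)).1
    have hsc_lb : ∀ j, (2*R)⁻¹ ≤ sc j := fun j => (h2pow _ (hρS j)).2
    set T : ℝ := (2:ℝ) ^ (((∑ j, ρ j : ℤ)) : ℝ) with hT
    have hTprod : T = ∏ j, sc j := by
      rw [hT, hsc]
      push_cast
      exact rpow_sum Finset.univ 2 two_pos _
    have hT_pos : 0 < T := Real.rpow_pos_of_pos two_pos _
    have hT_ub : T ≤ (2*R)^k := by
      rw [hTprod]
      calc ∏ j, sc j ≤ ∏ _j : Fin k, (2*R) :=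
            Finset.prod_le_prod (fun j _ => (hsc_pos j).le) (fun j _ => hsc_ub j)
        _ = (2*R)^k := by rw [Finset.prod_const, Finset.card_univ, Fintype.card_fin]
    have hT_lb : ((2*R)^k)⁻¹ ≤ T := by
      rw [hTprod]
      calc ((2*R)^k)⁻¹ = ∏ _j : Fin k, (2*R)⁻¹ := by
            rw [Finset.prod_const, Finset.card_univ, Fintype.card_fin, inv_pow]
        _ ≤ ∏ j, sc j :=
            Finset.prod_le_prod (fun j _ => by positivity) (fun j _ => hsc_lb j)
    have h2Rk : (2*R)^k ≤ X ^ (2*K*ε₁) := by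
      calc (2*R)^k ≤ (X ^ (2*ε₁))^k := pow_le_pow_left₀ h2R0.le h2R k
        _ = X ^ (2*K*ε₁) := by
            rw [← Real.rpow_natCast (X ^ (2*ε₁)) k, ← Real.rpow_mul hX0.le, ← hK]
            ring_nf
    set η' : ℂ := η * ((T:ℝ):ℂ) with hη'
    set Y : ℝ := ‖η'‖ with hY
    have hnormT : ‖((T:ℝ):ℂ)‖ = T := by
      simp [Complex.norm_real, abs_of_pos hT_pos]
    have hYeq : Y = X * T := by
      rw [hY, hη', norm_mul, hnormT, hXdef]
    have hY_lb : X ^ (1 - 2*K*ε₁) ≤ Y := by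
      rw [hYeq]
      have h1 : X ^ (1 - 2*K*ε₁) = X * X ^ (-(2*K*ε₁)) := by
        rw [show (1:ℝ) - 2*K*ε₁ = 1 + -(2*K*ε₁) by ring, Real.rpow_add hX0, Real.rpow_one]
      rw [h1]
      have h2 : X ^ (-(2*K*ε₁)) ≤ T := by
        rw [Real.rpow_neg hX0.le]
        exact le_trans (inv_anti₀ (by positivity) h2Rk) hT_lb
      exact mul_le_mul_of_nonneg_left h2 hX0.le
    have hY_ub : Y ≤ X ^ (1 + 2*K*ε₁) := by
      rw [hYeq, Real.rpow_add hX0, Real.rpow_one]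
      exact mul_le_mul_of_nonneg_left (le_trans hT_ub h2Rk) hX0.le
    have hY0 : (0:ℝ) < Y := by rw [hYeq]; positivity
    have h2Kε₁ : 2*K*ε₁ ≤ 1/2 := by linarith only [hkey2, hε₂le1]
    have hY1 : 1 < Y := by
      calc (1:ℝ) < 2 := one_lt_two
        _ ≤ X ^ (1/2:ℝ) := hhalf
        _ ≤ X ^ (1 - 2*K*ε₁) := hXrpow_le (by linarith)
        _ ≤ Y := hY_lb
    -- the rescaled measures
    set ν : Fin k → Measure ℂ := fun j => (lam j).restrict (Ann (ρ j)) with hν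
    haveI hνfin : ∀ j, IsFiniteMeasure (ν j) := fun j =>
      ⟨by rw [show (ν j) Set.univ = lam j (Ann (ρ j)) from Measure.restrict_apply_univ _]
          exact measure_lt_top _ _⟩
    haveI : ∀ j, SigmaFinite (ν j) := fun j => inferInstance
    set φ : Fin k → ℂ → ℂ := fun j z => (((sc j)⁻¹ : ℝ) : ℂ) * z with hφ
    have hφ_meas : ∀ j, Measurable (φ j) := fun j => measurable_id.const_mul _
    set κ : Fin k → Measure ℂ := fun j => (ν j).map (φ j) with hκ
    haveI hκfin : ∀ j, IsFiniteMeasure (κ j) := fun j =>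
      ⟨by rw [show (κ j) Set.univ = (ν j) (φ j ⁻¹' Set.univ) from
            Measure.map_apply (hφ_meas j) MeasurableSet.univ]
          exact measure_lt_top _ _⟩
    haveI : ∀ j, SigmaFinite (κ j) := fun j => inferInstance
    set cRE : ℝ≥0∞ := (ENNReal.ofReal R)⁻¹ with hcRE
    have hofR0 : ENNReal.ofReal R ≠ 0 := by
      simp only [ne_eq, ENNReal.ofReal_eq_zero, not_le]
      linarith
    have hcRE_ne_top : cRE ≠ ⊤ := by
      rw [hcRE]; exact ENNReal.inv_ne_top.mpr hofR0
    set μ : Fin k → Measure ℂ := fun j => cRE • κ j with hμ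
    -- support hypothesis
    have hEmeas : MeasurableSet {z : ℂ | ¬((2:ℝ)⁻¹ ≤ ‖z‖ ∧ ‖z‖ ≤ 2)} := by
      have h1 : {z : ℂ | ¬((2:ℝ)⁻¹ ≤ ‖z‖ ∧ ‖z‖ ≤ 2)}
          = ((fun z : ℂ => ‖z‖) ⁻¹' Set.Icc (2:ℝ)⁻¹ 2)ᶜ := by
        ext z; simp [Set.mem_Icc]
      rw [h1]
      exact (measurable_norm measurableSet_Icc).compl
    have hsupp' : ∀ j, μ j {z : ℂ | ¬((2:ℝ)⁻¹ ≤ ‖z‖ ∧ ‖z‖ ≤ 2)} = 0 := by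
      intro j
      show (cRE • κ j) _ = 0
      rw [Measure.smul_apply, smul_eq_mul,
        show κ j = (ν j).map (φ j) from rfl,
        Measure.map_apply (hφ_meas j) hEmeas,
        show ν j = (lam j).restrict (Ann (ρ j)) from rfl,
        Measure.restrict_apply' (measurableSet_Ann _)]
      have hempty : φ j ⁻¹' {z : ℂ | ¬((2:ℝ)⁻¹ ≤ ‖z‖ ∧ ‖z‖ ≤ 2)} ∩ Ann (ρ j) = ∅ := by
        rw [Set.eq_empty_iff_forall_notMem]
        rintro z ⟨hzE, hzA⟩
        apply hzE
        obtain ⟨hz1, hz2⟩ := hzA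
        have hzpos : 0 < ‖z‖ := lt_trans (Real.rpow_pos_of_pos two_pos _) hz1
        have hnorm : ‖φ j z‖ = (sc j)⁻¹ * ‖z‖ := by
          rw [show φ j z = (((sc j)⁻¹ : ℝ) : ℂ) * z from rfl, norm_mul]
          congr 1
          rw [Complex.norm_real, Real.norm_eq_abs]
          exact abs_of_pos (inv_pos.mpr (hsc_pos j))
        have h2r : (2:ℝ) ^ ((ρ j : ℝ) - 1) = sc j / 2 := by
          rw [Real.rpow_sub two_pos, Real.rpow_one]
        constructor
        · rw [hnorm]
          have h3 : (sc j)⁻¹ * (sc j / 2) ≤ (sc j)⁻¹ * ‖z‖ :=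
            mul_le_mul_of_nonneg_left (by linarith) (inv_nonneg.mpr (hsc_pos j).le)
          have h4 : (sc j)⁻¹ * (sc j / 2) = 2⁻¹ := by
            field_simp
            exact div_self (hsc_pos j).ne'
          linarith
        · rw [hnorm]
          have h3 : (sc j)⁻¹ * ‖z‖ ≤ (sc j)⁻¹ * sc j :=
            mul_le_mul_of_nonneg_left hz2 (inv_nonneg.mpr (hsc_pos j).le)
          have h4 : (sc j)⁻¹ * sc j = 1 := inv_mul_cancel₀ (hsc_pos j).ne'
          linarith
      rw [hempty, measure_empty, mul_zero]
    -- mass hypothesis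
    have hmass' : ∀ j, μ j Set.univ ≤ ENNReal.ofReal 2 := by
      intro j
      show (cRE • κ j) Set.univ ≤ _
      rw [Measure.smul_apply, smul_eq_mul]
      have h1 : κ j Set.univ ≤ ENNReal.ofReal R := by
        rw [show κ j = (ν j).map (φ j) from rfl,
          Measure.map_apply (hφ_meas j) MeasurableSet.univ, Set.preimage_univ,
          show ν j = (lam j).restrict (Ann (ρ j)) from rfl, Measure.restrict_apply_univ]
        exact le_trans (measure_mono (Set.subset_univ _)) (hmass j)
      calc cRE * κ j Set.univ ≤ cRE * ENNReal.ofReal R := mul_le_mul_right h1 _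
        _ = 1 := by rw [hcRE]; exact ENNReal.inv_mul_cancel hofR0 ENNReal.ofReal_ne_top
        _ ≤ ENNReal.ofReal 2 := by
            rw [show (1:ℝ≥0∞) = ENNReal.ofReal 1 by simp]
            exact ENNReal.ofReal_le_ofReal (by norm_num)
    -- non-concentration hypothesis
    have hnc' : ∀ j, ∀ σ : ℝ, 2 * Y⁻¹ ≤ σ → σ ≤ 2⁻¹ * Y ^ (-ε₂) → ∀ a θ : ℝ,
        (μ j {z : ℂ | |(Complex.exp ((θ:ℂ) * Complex.I) * z).re - a| ≤ σ}).toReal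
          ≤ 2 * σ ^ γ := by
      intro j σ hσl hσu a θ
      have hYinv0 : 0 < Y⁻¹ := inv_pos.mpr hY0
      have hσ0 : 0 < σ := lt_of_lt_of_le (by linarith) hσl
      have hs0 : 0 < sc j := hsc_pos j
      set s : ℝ := sc j with hs_def
      set σ' : ℝ := σ * s with hσ'def
      have hσ'_lb : X ^ (-(2:ℝ)) ≤ σ' := by
        have e1 : X ^ (-(1+2*K*ε₁)) ≤ Y⁻¹ := by
          rw [Real.rpow_neg hX0.le]
          exact inv_anti₀ hY0 hY_ub
        have e2 : X ^ (-(2*ε₁)) ≤ (2*R)⁻¹ := by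
          rw [Real.rpow_neg hX0.le]
          exact inv_anti₀ h2R0 h2R
        calc X ^ (-(2:ℝ)) ≤ X ^ (-(1+2*K*ε₁) + -(2*ε₁)) := by
              apply hXrpow_le
              have h6 : 2*(K+1)*ε₁ ≤ 1 := le_trans hkey1 hε₂le1
              linarith only [h6]
          _ = X ^ (-(1+2*K*ε₁)) * X ^ (-(2*ε₁)) := Real.rpow_add hX0 _ _
          _ ≤ Y⁻¹ * (2*R)⁻¹ := mul_le_mul e1 e2 (by positivity) (by positivity)
          _ ≤ σ * s := by
              have h5 : Y⁻¹ ≤ σ := by linarith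
              exact mul_le_mul h5 (hsc_lb j) (by positivity) hσ0.le
      have hσ'_ub : σ' ≤ X ^ (-ε₁) := by
        have hYnegpow0 : (0:ℝ) ≤ Y ^ (-ε₂) := Real.rpow_nonneg hY0.le _
        have e3 : Y ^ (-ε₂) ≤ (X ^ (1 - 2*K*ε₁)) ^ (-ε₂) :=
          Real.rpow_le_rpow_of_nonpos (by positivity) hY_lb (by linarith)
        have hint : 2*K*ε₁*ε₂ ≤ 2*K*ε₁ := by
          linarith only [mul_nonneg (mul_nonneg (by linarith only [hKpos] : (0:ℝ) ≤ 2*K) hε₁0.le)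
            (by linarith only [hε₂le1] : (0:ℝ) ≤ 1-ε₂)]
        calc σ * s ≤ (2⁻¹ * Y ^ (-ε₂)) * (2*R) :=
              mul_le_mul hσu (hsc_ub j) hs0.le (by positivity)
          _ = R * Y ^ (-ε₂) := by ring
          _ ≤ X ^ ε₁ * (X ^ (1 - 2*K*ε₁)) ^ (-ε₂) :=
              mul_le_mul hRle e3 hYnegpow0 (by positivity)
          _ = X ^ (ε₁ + (1 - 2*K*ε₁) * (-ε₂)) := by
              rw [← Real.rpow_mul hX0.le, ← Real.rpow_add hX0]
          _ ≤ X ^ (-ε₁) := by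
              apply hXrpow_le
              linarith only [hint, hε₁eq, mul_nonneg hKpos.le hε₁0.le]
      set Strip : Set ℂ := {z : ℂ | |(Complex.exp ((θ:ℂ) * Complex.I) * z).re - a| ≤ σ}
        with hStrip
      have hStrip_meas : MeasurableSet Strip := by
        have h1 : Strip = (fun z : ℂ => (Complex.exp ((θ:ℂ) * Complex.I) * z).re) ⁻¹'
            (Set.Icc (a - σ) (a + σ)) := by
          ext z
          simp only [hStrip, Set.mem_setOf_eq, Set.mem_preimage, Set.mem_Icc]
          rw [abs_le]
          constructor <;> (rintro ⟨u, v⟩; exact ⟨by linarith, by linarith⟩)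
        rw [h1]
        exact (Complex.measurable_re.comp (measurable_id.const_mul _)) measurableSet_Icc
      set Strip' : Set ℂ :=
        {z : ℂ | |(Complex.exp ((θ:ℂ) * Complex.I) * z).re - a*s| ≤ σ'} with hStrip'
      have hpre : φ j ⁻¹' Strip = Strip' := by
        ext z
        simp only [Set.mem_preimage, hStrip, hStrip', Set.mem_setOf_eq]
        rw [show φ j z = ((s⁻¹ : ℝ):ℂ) * z from rfl]
        have hre : (Complex.exp ((θ:ℂ) * Complex.I) * (((s⁻¹:ℝ):ℂ) * z)).re
            = s⁻¹ * (Complex.exp ((θ:ℂ) * Complex.I) * z).re := by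
          rw [show Complex.exp ((θ:ℂ) * Complex.I) * (((s⁻¹:ℝ):ℂ) * z)
              = ((s⁻¹:ℝ):ℂ) * (Complex.exp ((θ:ℂ) * Complex.I) * z) by ring]
          exact Complex.re_ofReal_mul _ _
        rw [hre]
        rw [show s⁻¹ * (Complex.exp ((θ:ℂ) * Complex.I) * z).re - a
            = s⁻¹ * ((Complex.exp ((θ:ℂ) * Complex.I) * z).re - a * s) by
          rw [mul_sub, mul_comm a s, ← mul_assoc, inv_mul_cancel₀ hs0.ne', one_mul]]
        rw [abs_mul, abs_inv, abs_of_pos hs0, inv_mul_le_iff₀ hs0, hσ'def, mul_comm σ s]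
      have hκStrip : κ j Strip = lam j (Strip' ∩ Ann (ρ j)) := by
        rw [show κ j = (ν j).map (φ j) from rfl,
          Measure.map_apply (hφ_meas j) hStrip_meas, hpre,
          show ν j = (lam j).restrict (Ann (ρ j)) from rfl,
          Measure.restrict_apply' (measurableSet_Ann _)]
      have hlamle : lam j (Strip' ∩ Ann (ρ j)) ≤ lam j Strip' :=
        measure_mono Set.inter_subset_left
      have hncσ' := hnc j σ' hσ'_lb hσ'_ub (a*s) θ
      show ((cRE • κ j) Strip).toReal ≤ 2 * σ ^ γ
      rw [Measure.smul_apply, smul_eq_mul, ENNReal.toReal_mul]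
      have hcREtoReal : cRE.toReal = R⁻¹ := by
        rw [hcRE, ENNReal.toReal_inv, ENNReal.toReal_ofReal hR0.le]
      rw [hcREtoReal, hκStrip]
      have htR : (lam j (Strip' ∩ Ann (ρ j))).toReal ≤ σ' ^ γ :=
        le_trans (ENNReal.toReal_mono (measure_ne_top _ _) hlamle) hncσ'
      have hsγ : s ^ γ ≤ 2*R := by
        calc s ^ γ ≤ (2*R) ^ γ := Real.rpow_le_rpow hs0.le (hsc_ub j) hγ0.le
          _ ≤ (2*R) ^ (1:ℝ) := Real.rpow_le_rpow_of_exponent_le h2R1 hγ1.le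
          _ = 2*R := Real.rpow_one _
      have hσ'γ : σ' ^ γ = σ ^ γ * s ^ γ := by
        rw [hσ'def]; exact Real.mul_rpow hσ0.le hs0.le
      calc R⁻¹ * (lam j (Strip' ∩ Ann (ρ j))).toReal ≤ R⁻¹ * (σ ^ γ * s ^ γ) := by
            rw [← hσ'γ]
            exact mul_le_mul_of_nonneg_left htR (by positivity)
        _ ≤ R⁻¹ * (σ ^ γ * (2*R)) := by
            have h6 := mul_le_mul_of_nonneg_left hsγ (Real.rpow_nonneg hσ0.le γ)
            exact mul_le_mul_of_nonneg_left h6 (by positivity)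
        _ = 2 * σ ^ γ := by field_simp
    -- apply the black box
    have hkey := hmain η' hY1 μ hsupp' hmass' hnc'
    -- identify the integrals
    have hπν : Measure.pi ν = (Measure.pi lam).restrict (B ρ) :=
      pi_restrict lam _ (fun j => measurableSet_Ann _)
    have hmp : MeasurePreserving (fun (z : Fin k → ℂ) (j : Fin k) => φ j (z j))
        (Measure.pi ν) (Measure.pi κ) :=
      measurePreserving_pi ν κ (fun j => ⟨hφ_meas j, rfl⟩)
    have hπμ : Measure.pi μ = (cRE ^ k) • Measure.pi κ := pi_smul cRE hcRE_ne_top κ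
    have hg_cont : Continuous (fun z : Fin k → ℂ =>
        Complex.exp (2 * π * ((η' * ∏ j, z j).re) * Complex.I)) := by fun_prop
    have hprod : ∀ z : Fin k → ℂ, η' * ∏ j, φ j (z j) = η * ∏ j, z j := by
      intro z
      have h1 : ∏ j, φ j (z j) = (∏ j, (((sc j)⁻¹ : ℝ):ℂ)) * ∏ j, z j := by
        rw [← Finset.prod_mul_distrib]
      have h2 : (∏ j, (((sc j)⁻¹ : ℝ):ℂ)) = (((T⁻¹ : ℝ)):ℂ) := by
        rw [hTprod]
        push_cast
        exact Finset.prod_inv_distrib _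
      rw [h1, h2, hη']
      calc η * ((T:ℝ):ℂ) * ((((T⁻¹:ℝ)):ℂ) * ∏ j, z j)
          = η * (((T:ℝ):ℂ) * (((T⁻¹:ℝ)):ℂ)) * ∏ j, z j := by ring
        _ = η * ∏ j, z j := by
            rw [← Complex.ofReal_mul, mul_inv_cancel₀ hT_pos.ne', Complex.ofReal_one, mul_one]
    have hfg : ∀ z : Fin k → ℂ,
        Complex.exp (2 * π * ((η' * ∏ j, φ j (z j)).re) * Complex.I) = f z := by
      intro z
      rw [hf, hprod z]
    have hInt : ∫ z, Complex.exp (2 * π * ((η' * ∏ j, z j).re) * Complex.I) ∂(Measure.pi μ)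
        = (R⁻¹)^k • ∫ z, f z ∂(Measure.pi ν) := by
      rw [hπμ, integral_smul_measure, ← hmp.map_eq,
        integral_map hmp.measurable.aemeasurable hg_cont.aestronglyMeasurable]
      congr 1
      · rw [ENNReal.toReal_pow, hcRE, ENNReal.toReal_inv, ENNReal.toReal_ofReal hR0.le]
      · exact integral_congr_ae (Filter.Eventually.of_forall fun z => hfg z)
    have hnorm_g : ‖∫ z, Complex.exp (2 * π * ((η' * ∏ j, z j).re) * Complex.I)
          ∂(Measure.pi μ)‖ = (R⁻¹)^k * ‖∫ z, f z ∂(Measure.pi ν)‖ := by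
      rw [hInt, norm_smul, Real.norm_eq_abs, abs_of_pos (by positivity)]
    have hfν : ‖∫ z, f z ∂(Measure.pi ν)‖
        = R^k * ‖∫ z, Complex.exp (2 * π * ((η' * ∏ j, z j).re) * Complex.I)
            ∂(Measure.pi μ)‖ := by
      rw [hnorm_g, ← mul_assoc, ← mul_pow, mul_inv_cancel₀ hR0.ne', one_pow, one_mul]
    have hRk_le : R^k ≤ X ^ (K*ε₁) := by
      calc R^k ≤ (X ^ ε₁)^k := pow_le_pow_left₀ hR0.le hRle k
        _ = X ^ (K*ε₁) := by
            rw [← Real.rpow_natCast (X^ε₁) k, ← Real.rpow_mul hX0.le, ← hK]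
            ring_nf
    have hYe : Y ^ (-ε₂) ≤ X ^ ((2*K*ε₁ - 1) * ε₂) := by
      calc Y ^ (-ε₂) ≤ (X ^ (1-2*K*ε₁)) ^ (-ε₂) :=
            Real.rpow_le_rpow_of_nonpos (by positivity) hY_lb (by linarith)
        _ = X ^ ((2*K*ε₁ - 1) * ε₂) := by
            rw [← Real.rpow_mul hX0.le]
            ring_nf
    calc ‖∫ z in B ρ, f z ∂(Measure.pi lam)‖
        = ‖∫ z, f z ∂(Measure.pi ν)‖ := by rw [← hπν]
      _ = R^k * ‖∫ z, Complex.exp (2 * π * ((η' * ∏ j, z j).re) * Complex.I)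
            ∂(Measure.pi μ)‖ := hfν
      _ ≤ R^k * (C₁ * Y ^ (-ε₂)) := by
          exact mul_le_mul_of_nonneg_left hkey (by positivity)
      _ ≤ X ^ (K*ε₁) * (C₁ * X ^ ((2*K*ε₁-1)*ε₂)) := by
          apply mul_le_mul hRk_le _ (by positivity) (by positivity)
          exact mul_le_mul_of_nonneg_left hYe hC₁0.le
      _ = C₁ * (X ^ (K*ε₁) * X ^ ((2*K*ε₁-1)*ε₂)) := by ring
      _ = C₁ * X ^ (K*ε₁ + (2*K*ε₁-1)*ε₂) := by rw [← Real.rpow_add hX0]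
      _ ≤ C₁ * X ^ (-((K+2) * ε₁)) := by
          have hint : 2*K*ε₁*ε₂ ≤ 2*K*ε₁ := by
            linarith only [mul_nonneg (mul_nonneg (by linarith only [hKpos] : (0:ℝ) ≤ 2*K) hε₁0.le)
              (by linarith only [hε₂le1] : (0:ℝ) ≤ 1-ε₂)]
          have hexp : K*ε₁ + (2*K*ε₁-1)*ε₂ ≤ -((K+2)*ε₁) := by
            linarith only [hint, hε₁eq, mul_nonneg hKpos.le hε₁0.le]
          exact mul_le_mul_of_nonneg_left (hXrpow_le hexp) hC₁0.le

  calc ‖∫ z, f z ∂(Measure.pi lam)‖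
      = ‖∑ ρ ∈ P, ∫ z in B ρ, f z ∂(Measure.pi lam)‖ := by rw [hdecomp]
    _ ≤ ∑ ρ ∈ P, ‖∫ z in B ρ, f z ∂(Measure.pi lam)‖ := norm_sum_le _ _
    _ ≤ ∑ _ρ ∈ P, C₁ * X ^ (-((K+2) * ε₁)) := Finset.sum_le_sum hterm
    _ = (P.card:ℝ) * (C₁ * X ^ (-((K+2) * ε₁))) := by
          rw [Finset.sum_const, nsmul_eq_mul]
    _ ≤ ((4*K+3)^k * X ^ ε₁) * (C₁ * X ^ (-((K+2) * ε₁))) := by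
          have h0 : (0:ℝ) ≤ C₁ * X ^ (-((K+2) * ε₁)) := by positivity
          exact mul_le_mul_of_nonneg_right hcardP h0
    _ = (4*K+3)^k * C₁ * (X ^ ε₁ * X ^ (-((K+2) * ε₁))) := by ring
    _ ≤ (4*K+3)^k * C₁ * X ^ (-ε₁) := by
          have h1 : X ^ ε₁ * X ^ (-((K+2) * ε₁)) = X ^ (ε₁ + -((K+2)*ε₁)) :=
            (Real.rpow_add hX0 _ _).symm
          have h2 : ε₁ + -((K+2)*ε₁) ≤ -ε₁ := by nlinarith
          have h3 : (0:ℝ) ≤ (4*K+3)^k * C₁ := by positivity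
          rw [h1]
          exact mul_le_mul_of_nonneg_left (hXrpow_le h2) h3
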